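/- For every ε ∈ (0, 1/2) there exists a constant C = C(ε) > 0 such that for all n, R ∈ ℕ with εn ≤ R ≤ n/2 and every α ∈ (ε, 1−ε), there exists M ⊆ B_n(R) with |M| = ⌊α|B_n(R)|⌋ whose vertex boundary in the Hamming ball graph B_n(R) satisfies |∂_{B_n(R)} M| ≤ (C/√n) · min(|M|, |B_n(R) ∖ M|). -/

import Mathlib

set_option maxHeartbeats 1600000

open Finset

/-- the family of subsets of `{1,…,n}` of size exactly `r` -/
def sphere (n r : ℕ) : Finset (Finset (Fin n)) :=
  Finset.univ.filter (fun X => X.card = r)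

/-- the family of subsets of `{1,…,n}` of size at most `R` -/
def hamBall (n R : ℕ) : Finset (Finset (Fin n)) :=
  Finset.univ.filter (fun X => X.card ≤ R)

/-- vertex boundary of `A` in the Hamming ball graph `B_n(R)`: vertices of the ball, not in
`A`, adjacent (symmetric difference of size one) to a member of `A` -/
def ballBoundary (n R : ℕ) (A : Finset (Finset (Fin n))) : Finset (Finset (Fin n)) :=
  (hamBall n R).filter (fun Y => Y ∉ A ∧ ∃ X ∈ A, (symmDiff X Y).card = 1)

namespace IsoAux

/-- step identity for hypergeometric weights -/
lemma step_id (m ν k a : ℕ) (hak : a < k) :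
    m.choose (a+1) * ν.choose (k - (a+1)) * ((a+1) * (ν - (k - a - 1)))
      = m.choose a * ν.choose (k - a) * ((m - a) * (k - a)) := by
  have h1 := Nat.choose_succ_right_eq m a
  have h2 := Nat.choose_succ_right_eq ν (k - a - 1)
  have e : k - a - 1 + 1 = k - a := by omega
  rw [e] at h2
  have e2 : k - (a+1) = k - a - 1 := by omega
  rw [e2]
  calc m.choose (a+1) * ν.choose (k - a - 1) * ((a+1) * (ν - (k - a - 1)))
      = (m.choose (a+1) * (a+1)) * (ν.choose (k-a-1) * (ν - (k - a - 1))) := by ring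
    _ = (m.choose a * (m - a)) * (ν.choose (k-a) * (k-a)) := by rw [h1, ← h2]
    _ = m.choose a * ν.choose (k - a) * ((m - a) * (k - a)) := by ring

lemma h_up (n k a : ℕ) (h2k : 2*k ≤ n) (ha : a < k/2) :
    (n/2).choose a * (n - n/2).choose (k-a) ≤ (n/2).choose (a+1) * (n - n/2).choose (k-(a+1)) := by
  set m := n/2 with hm
  set ν := n - n/2 with hν
  have hak : a < k := by omega
  have id := step_id m ν k a hak
  have hD : 0 < (a+1) * (ν - (k - a - 1)) := by
    have : k - a - 1 < ν := by omega
    exact Nat.mul_pos (Nat.succ_pos a) (by omega)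
  have hfac : (a+1) * (ν - (k - a - 1)) ≤ (m - a) * (k - a) := by
    have h1 : a + 1 ≤ k - a := by omega
    have h2 : ν - (k - a - 1) ≤ m - a := by omega
    calc (a+1) * (ν - (k - a - 1)) ≤ (k - a) * (m - a) := Nat.mul_le_mul h1 h2
      _ = (m - a) * (k - a) := by ring
  have : m.choose a * ν.choose (k-a) * ((a+1) * (ν - (k - a - 1)))
      ≤ m.choose (a+1) * ν.choose (k-(a+1)) * ((a+1) * (ν - (k - a - 1))) := by
    rw [id]
    exact Nat.mul_le_mul_left _ hfac
  exact Nat.le_of_mul_le_mul_right this hD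

lemma h_down (n k a : ℕ) (h2k : 2*k ≤ n) (ha : k/2 ≤ a) (hak : a < k) :
    (n/2).choose (a+1) * (n - n/2).choose (k-(a+1)) ≤ (n/2).choose a * (n - n/2).choose (k-a) := by
  set m := n/2 with hm
  set ν := n - n/2 with hν
  have id := step_id m ν k a hak
  have hD : 0 < (a+1) * (ν - (k - a - 1)) := by
    have : k - a - 1 < ν := by omega
    exact Nat.mul_pos (Nat.succ_pos a) (by omega)
  have hfac : (m - a) * (k - a) ≤ (a+1) * (ν - (k - a - 1)) := by
    have h1 : k - a ≤ a + 1 := by omega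
    have h2 : m - a ≤ ν - (k - a - 1) := by omega
    calc (m - a) * (k - a) ≤ (ν - (k - a - 1)) * (a+1) := Nat.mul_le_mul h2 h1
      _ = (a+1) * (ν - (k - a - 1)) := by ring
  have : m.choose (a+1) * ν.choose (k-(a+1)) * ((a+1) * (ν - (k - a - 1)))
      ≤ m.choose a * ν.choose (k-a) * ((a+1) * (ν - (k - a - 1))) := by
    rw [id]
    exact Nat.mul_le_mul_left _ hfac
  exact Nat.le_of_mul_le_mul_right this hD

lemma h_max (n k : ℕ) (h2k : 2*k ≤ n) : ∀ a ≤ k,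
    (n/2).choose a * (n - n/2).choose (k-a)
      ≤ (n/2).choose (k/2) * (n - n/2).choose (k - k/2) := by
  have up : ∀ b ≤ k/2, ∀ a ≤ b,
      (n/2).choose a * (n - n/2).choose (k-a) ≤ (n/2).choose b * (n - n/2).choose (k-b) := by
    intro b
    induction b with
    | zero =>
      intro _ a ha
      have : a = 0 := by omega
      subst this; exact le_refl _
    | succ b ih =>
      intro hb a ha
      rcases Nat.eq_or_lt_of_le ha with rfl | h
      · exact le_refl _
      · exact le_trans (ih (by omega) a (by omega)) (h_up n k b h2k (by omega))
  have down : ∀ b, k/2 ≤ b → b ≤ k →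
      (n/2).choose b * (n - n/2).choose (k-b) ≤ (n/2).choose (k/2) * (n - n/2).choose (k-k/2) := by
    intro b hb
    induction b, hb using Nat.le_induction with
    | base => intro _; exact le_refl _
    | succ b hb ih =>
      intro hbk
      exact le_trans (h_down n k b h2k hb (by omega)) (ih (by omega))
  intro a ha
  rcases le_or_gt a (k/2) with h | h
  · exact up (k/2) le_rfl a h
  · exact down a (by omega) ha


lemma vandermonde (n k : ℕ) :
    (n.choose k) = ∑ a ∈ range (k+1), (n/2).choose a * (n - n/2).choose (k - a) := by
  have h : n/2 + (n - n/2) = n := by omega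
  conv_lhs => rw [← h]
  rw [Nat.add_choose_eq, Finset.Nat.sum_antidiagonal_eq_sum_range_succ_mk]

lemma term_le (n k a : ℕ) (ha : a ≤ k) :
    (n/2).choose a * (n - n/2).choose (k - a) ≤ n.choose k := by
  rw [vandermonde n k]
  exact Finset.single_le_sum (f := fun a => (n/2).choose a * (n - n/2).choose (k-a))
    (fun _ _ => Nat.zero_le _) (mem_range.2 (by omega))


-- the real per-step ratio bound
lemma step_real (ε : ℝ) (hε0 : 0 < ε) (hε1 : ε < 1/2) (n k a : ℕ)
    (hsqn : 2*(1200/ε^2) + 40/ε + 100 ≤ Real.sqrt n)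
    (hεk : ε * n ≤ 8 * k) (h2k : 2*k ≤ n)
    (ha0 : k/2 ≤ a) (ha1 : (a:ℝ) ≤ (k:ℝ)/2 + Real.sqrt n) :
    (1 - (1200/ε^2) / Real.sqrt n) * (((a:ℝ)+1) * (((n - n/2 : ℕ):ℝ) - ((k:ℝ) - (a:ℝ) - 1)))
      ≤ (((n/2 : ℕ):ℝ) - (a:ℝ)) * ((k:ℝ) - (a:ℝ)) := by
  have hc₂pos : (0:ℝ) < 1200/ε^2 := by positivity
  set c₂ : ℝ := 1200/ε^2 with hc₂
  have hε2 : (0:ℝ) < ε^2 := by positivity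
  have h40ε : (0:ℝ) ≤ 40/ε := by positivity
  have h100 : (100:ℝ) ≤ Real.sqrt n := by linarith
  have hsp : (0:ℝ) < Real.sqrt n := by linarith
  have hb5 : Real.sqrt n * Real.sqrt n = (n:ℝ) := Real.mul_self_sqrt (Nat.cast_nonneg n)
  have hnn : 100 * (n:ℝ) ≤ (n:ℝ) * Real.sqrt n := by
    have := mul_le_mul_of_nonneg_left h100 (Nat.cast_nonneg (α := ℝ) n)
    linarith
  have hsn : Real.sqrt n ≤ (n:ℝ)/100 := by
    have := mul_le_mul_of_nonneg_left h100 (Real.sqrt_nonneg (n:ℝ))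
    nlinarith [hb5]
  have hn100 : (10000:ℝ) ≤ (n:ℝ) := by nlinarith [hb5, h100]
  have hc2s : 2*c₂ ≤ Real.sqrt n := by linarith
  have hes : 40/ε ≤ Real.sqrt n := by linarith
  have hes' : 40 * Real.sqrt n ≤ ε * (n:ℝ) := by
    have h1 : (40:ℝ) ≤ ε * Real.sqrt n := by
      have := mul_le_mul_of_nonneg_left hes hε0.le
      rw [mul_div_cancel₀ _ (ne_of_gt hε0)] at this
      linarith
    calc 40 * Real.sqrt n ≤ (ε * Real.sqrt n) * Real.sqrt n := by
          exact mul_le_mul_of_nonneg_right h1 (Real.sqrt_nonneg _)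
      _ = ε * n := by rw [mul_assoc, hb5]
  -- cast facts
  have hM1 : (n:ℝ)/2 - 1/2 ≤ ((n/2:ℕ):ℝ) := by
    have h' : (n:ℝ) ≤ ((n/2 : ℕ):ℝ)*2 + 1 := by exact_mod_cast (by omega : n ≤ n/2*2 + 1)
    linarith
  have hM2 : ((n/2:ℕ):ℝ) ≤ (n:ℝ)/2 := by
    have h' : ((n/2 : ℕ):ℝ)*2 ≤ (n:ℝ) := by exact_mod_cast (by omega : n/2*2 ≤ n)
    linarith
  have hV : ((n - n/2 : ℕ):ℝ) = (n:ℝ) - ((n/2:ℕ):ℝ) := by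
    exact_mod_cast Nat.cast_sub (by omega : n/2 ≤ n)
  have hK2 : 2*(k:ℝ) ≤ (n:ℝ) := by exact_mod_cast h2k
  have hKs : 5 * Real.sqrt n ≤ (k:ℝ) := by linarith
  have hx0 : ((k:ℝ) - 1)/2 ≤ (a:ℝ) := by
    have h1 : ((k/2:ℕ):ℝ)*2 + 1 ≥ (k:ℝ) := by exact_mod_cast (by omega : k ≤ k/2*2+1)
    have h2 : ((k/2:ℕ):ℝ) ≤ (a:ℝ) := by exact_mod_cast ha0
    linarith
  have hxn : ε * (n:ℝ) / 20 ≤ (a:ℝ) := by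
    have h2 : (4000:ℝ) ≤ ε * (n:ℝ) := by linarith
    linarith
  have hxpos : (0:ℝ) < (a:ℝ) := by
    have h2 : (4000:ℝ) ≤ ε * (n:ℝ) := by linarith
    linarith
  have hKV : (k:ℝ) ≤ ((n - n/2:ℕ):ℝ) := by rw [hV]; linarith
  -- P and Q
  set x : ℝ := (a:ℝ) with hxdef
  set P : ℝ := (x+1) * (((n - n/2:ℕ):ℝ) - ((k:ℝ) - x - 1)) with hP
  set Q : ℝ := (((n/2:ℕ):ℝ) - x) * ((k:ℝ) - x) with hQ
  have hPx : x*x ≤ P := by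
    rw [hP]
    have h1 : x ≤ ((n - n/2:ℕ):ℝ) - ((k:ℝ) - x - 1) := by linarith
    exact mul_le_mul (by linarith) h1 hxpos.le (by linarith)
  have hPQ : P - Q = x*((n:ℝ)+2) + ((n:ℝ) - ((n/2:ℕ):ℝ) - (k:ℝ) + 1) - ((n/2:ℕ):ℝ)*(k:ℝ) := by
    rw [hP, hQ, hV]; ring
  have hup : P - Q ≤ 3 * (n:ℝ) * Real.sqrt n := by
    have h1 : x*((n:ℝ)+2) ≤ ((k:ℝ)/2 + Real.sqrt n)*((n:ℝ)+2) :=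
      mul_le_mul_of_nonneg_right (by rw [hxdef]; exact ha1) (by positivity)
    have h2 : ((n:ℝ)/2 - 1/2)*(k:ℝ) ≤ ((n/2:ℕ):ℝ)*(k:ℝ) :=
      mul_le_mul_of_nonneg_right hM1 (Nat.cast_nonneg k)
    have h3 : (n:ℝ) - ((n/2:ℕ):ℝ) - (k:ℝ) + 1 ≤ (n:ℝ) + 1 := by
      have := Nat.cast_nonneg (α := ℝ) (n/2)
      have := Nat.cast_nonneg (α := ℝ) k
      linarith
    have e2 : ((k:ℝ)/2 + Real.sqrt n)*((n:ℝ)+2) - ((n:ℝ)/2-1/2)*(k:ℝ)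
        = (3/2)*(k:ℝ) + Real.sqrt n*((n:ℝ)+2) := by ring
    have h4 : P - Q ≤ (3/2)*(k:ℝ) + Real.sqrt n*((n:ℝ)+2) + (n:ℝ) + 1 := by linarith
    have h5 : Real.sqrt n*((n:ℝ)+2) = (n:ℝ)*Real.sqrt n + 2*Real.sqrt n := by ring
    -- K ≤ n/2, 2√n ≤ n, n ≤ n√n/100
    linarith
  have hdown : 3 * (n:ℝ) * Real.sqrt n ≤ (c₂ / Real.sqrt n) * P := by
    rw [div_mul_eq_mul_div, le_div_iff₀ hsp]
    have hxx : (ε*(n:ℝ)/20)*(ε*(n:ℝ)/20) ≤ x*x := by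
      have h0 : (0:ℝ) ≤ ε*(n:ℝ)/20 := by positivity
      exact mul_le_mul hxn hxn h0 hxpos.le
    have heq : c₂ * ((ε*(n:ℝ)/20)*(ε*(n:ℝ)/20)) = 3*((n:ℝ)*(n:ℝ)) := by
      rw [hc₂]; field_simp; ring
    have h6 : 3*((n:ℝ)*(n:ℝ)) ≤ c₂ * (x*x) := by
      rw [← heq]
      exact mul_le_mul_of_nonneg_left hxx hc₂pos.le
    calc 3*(n:ℝ)*Real.sqrt n * Real.sqrt n = 3*((n:ℝ)*(n:ℝ)) := by
          rw [mul_assoc, hb5]; ring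
      _ ≤ c₂ * (x*x) := h6
      _ ≤ c₂ * P := mul_le_mul_of_nonneg_left hPx hc₂pos.le
  have hfin : P - Q ≤ (c₂/Real.sqrt n) * P := le_trans hup hdown
  have hgoal : (1 - c₂ / Real.sqrt n) * P ≤ Q := by linarith
  exact hgoal


lemma core (ε : ℝ) (hε0 : 0 < ε) (hε1 : ε < 1/2) :
    ∃ Cc : ℝ, 0 < Cc ∧ ∃ n₀ : ℕ, ∀ n, n₀ ≤ n → ∀ k : ℕ, ε * n ≤ 8 * k → 2 * k ≤ n →
      ∀ a : ℕ, a ≤ k →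
      (((n/2).choose a * ((n - n/2).choose (k - a)) : ℕ) : ℝ)
        ≤ Cc / Real.sqrt n * (n.choose k) := by
  have hc₂pos : (0:ℝ) < 1200/ε^2 := by positivity
  set c₂ : ℝ := 1200/ε^2 with hc₂
  refine ⟨2 * Real.exp (2*c₂), by positivity, ⌈(2*c₂ + 40/ε + 100)^2⌉₊, ?_⟩
  intro n hn k hεk h2k a hak
  -- basic numeric facts
  have hns : ((2*c₂ + 40/ε + 100)^2 : ℝ) ≤ n := le_trans (Nat.le_ceil _) (by exact_mod_cast hn)
  have hq0 : (0:ℝ) ≤ 2*c₂ + 40/ε + 100 := by positivity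
  have hsqn : 2*c₂ + 40/ε + 100 ≤ Real.sqrt n := by
    have := Real.sqrt_le_sqrt hns
    rwa [Real.sqrt_sq hq0] at this
  have h40ε : (0:ℝ) ≤ 40/ε := by positivity
  have h100 : (100:ℝ) ≤ Real.sqrt n := by linarith
  have hsp : (0:ℝ) < Real.sqrt n := by linarith
  have hb5 : Real.sqrt n * Real.sqrt n = (n:ℝ) := Real.mul_self_sqrt (Nat.cast_nonneg n)
  have hn1 : 1 ≤ n := by
    by_contra h
    push_neg at h
    interval_cases n <;> simp_all [Real.sqrt_zero] <;> linarith
  have hc2s : 2*c₂ ≤ Real.sqrt n := by linarith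
  have hes : 40/ε ≤ Real.sqrt n := by linarith
  have hes' : 40 * Real.sqrt n ≤ ε * (n:ℝ) := by
    have h1 : (40:ℝ) ≤ ε * Real.sqrt n := by
      have := mul_le_mul_of_nonneg_left hes hε0.le
      rw [mul_div_cancel₀ _ (ne_of_gt hε0)] at this
      linarith
    calc 40 * Real.sqrt n ≤ (ε * Real.sqrt n) * Real.sqrt n :=
          mul_le_mul_of_nonneg_right h1 (Real.sqrt_nonneg _)
      _ = ε * n := by rw [mul_assoc, hb5]
  have hKs : 5 * Real.sqrt n ≤ (k:ℝ) := by
    have : ε * (n:ℝ) ≤ 8 * k := hεk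
    linarith
  set s : ℕ := Nat.sqrt n with hs
  have hsr : (s:ℝ) ≤ Real.sqrt n := Real.nat_sqrt_le_real_sqrt
  have hsr2 : Real.sqrt n ≤ (s:ℝ) + 1 := by
    have h1 : n < (s+1)^2 := Nat.lt_succ_sqrt' n
    have h2 : (n:ℝ) < ((s:ℝ)+1)^2 := by exact_mod_cast h1
    nlinarith [Real.sqrt_nonneg (n:ℝ), hb5]
  set a₀ : ℕ := k/2 with ha₀
  -- window inside support
  have ha₀r : (a₀:ℝ) ≤ (k:ℝ)/2 := by
    have : (a₀:ℝ)*2 ≤ (k:ℝ) := by exact_mod_cast (by omega : k/2*2 ≤ k)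
    linarith
  have hwin : a₀ + s + 1 ≤ k := by
    have h1 : ((a₀ + s + 1 : ℕ):ℝ) < (k:ℝ) := by
      push_cast
      have : (k:ℝ)/2 ≥ (5/2) * Real.sqrt n := by linarith
      linarith
    exact_mod_cast h1.le
  set δ : ℝ := c₂ / Real.sqrt n with hδ
  have hδpos : 0 < δ := by positivity
  have hδhalf : δ ≤ 1/2 := by
    rw [hδ, div_le_iff₀ hsp]
    linarith
  set h : ℕ → ℕ := fun a => (n/2).choose a * (n - n/2).choose (k - a) with hh
  -- per-step bound on the window
  have hstep : ∀ b : ℕ, a₀ ≤ b → b < a₀ + s → (1-δ) * (h b : ℝ) ≤ (h (b+1) : ℝ) := by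
    intro b hb1 hb2
    have hbk : b < k := by omega
    have hbm : b ≤ n/2 := by omega
    have hkν : k - b - 1 ≤ n - n/2 := by omega
    have hid : ((h (b+1) : ℕ):ℝ) * (((b:ℝ)+1) * (((n - n/2:ℕ):ℝ) - ((k:ℝ) - b - 1)))
        = (h b : ℝ) * ((((n/2:ℕ):ℝ) - b) * ((k:ℝ) - b)) := by
      have := step_id (n/2) (n - n/2) k b hbk
      have hcast : ((((n/2).choose (b+1) * (n - n/2).choose (k - (b+1))
          * ((b+1) * ((n - n/2) - (k - b - 1)))) : ℕ) : ℝ)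
          = (((n/2).choose b * (n - n/2).choose (k - b) * (((n/2) - b) * (k - b)) : ℕ) : ℝ) := by
        exact_mod_cast congrArg (Nat.cast (R := ℝ)) this
      have e0 : k - b - 1 = k - (b+1) := by omega
      rw [e0] at hcast
      push_cast [Nat.cast_sub hbm, Nat.cast_sub (e0 ▸ hkν), Nat.cast_sub hbk.le,
        Nat.cast_sub (show b+1 ≤ k by omega)] at hcast
      rw [hh]
      push_cast
      linear_combination hcast
    have hreal := step_real ε hε0 hε1 n k b hsqn hεk h2k hb1
      (by
        have : (b:ℝ) ≤ (a₀:ℝ) + (s:ℝ) := by exact_mod_cast (by omega : b ≤ a₀ + s)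
        linarith)
    have hDpos : (0:ℝ) < ((b:ℝ)+1) * (((n - n/2:ℕ):ℝ) - ((k:ℝ) - b - 1)) := by
      have h1 : (0:ℝ) < (b:ℝ)+1 := by positivity
      have h2 : ((k:ℝ) - b - 1) < ((n - n/2:ℕ):ℝ) := by
        have he : ((k - b - 1 : ℕ):ℝ) = (k:ℝ) - b - 1 := by
          rw [show k - b - 1 = k - (b+1) from by omega, Nat.cast_sub (by omega : b+1 ≤ k)]
          push_cast; ring
        rw [← he]
        exact_mod_cast (by omega : k - b - 1 < n - n/2)
      exact mul_pos h1 (by linarith)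
    -- (1-δ) h b * D ≤ h b * ((M-x)(K-x)) = h(b+1) * D
    have hmul : (1-δ) * (h b:ℝ) * (((b:ℝ)+1) * (((n - n/2:ℕ):ℝ) - ((k:ℝ) - b - 1)))
        ≤ (h (b+1):ℝ) * (((b:ℝ)+1) * (((n - n/2:ℕ):ℝ) - ((k:ℝ) - b - 1))) := by
      rw [hid]
      have hbnn : (0:ℝ) ≤ (h b : ℝ) := Nat.cast_nonneg _
      calc (1-δ) * (h b:ℝ) * (((b:ℝ)+1) * (((n - n/2:ℕ):ℝ) - ((k:ℝ) - b - 1)))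
          = (h b:ℝ) * ((1-δ) * (((b:ℝ)+1) * (((n - n/2:ℕ):ℝ) - ((k:ℝ) - b - 1)))) := by ring
        _ ≤ (h b:ℝ) * ((((n/2:ℕ):ℝ) - b) * ((k:ℝ) - b)) := by
            exact mul_le_mul_of_nonneg_left hreal hbnn
    exact le_of_mul_le_mul_right hmul hDpos
  -- window chain
  have hchain : ∀ u : ℕ, u ≤ s → (1-δ)^u * (h a₀ : ℝ) ≤ (h (a₀ + u) : ℝ) := by
    intro u
    induction u with
    | zero => intro _; simp
    | succ u ih =>
      intro hu
      have h1 := ih (by omega)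
      have h2 := hstep (a₀ + u) (by omega) (by omega)
      have hδ1 : (0:ℝ) ≤ 1 - δ := by linarith
      calc (1-δ)^(u+1) * (h a₀ : ℝ) = (1-δ) * ((1-δ)^u * (h a₀ : ℝ)) := by ring
        _ ≤ (1-δ) * (h (a₀ + u) : ℝ) := mul_le_mul_of_nonneg_left h1 hδ1
        _ ≤ (h (a₀ + u + 1) : ℝ) := h2
  -- exponential lower bound on (1-δ)^u
  have hexp : ∀ u : ℕ, u ≤ s → Real.exp (-(2*c₂)) ≤ (1-δ)^u := by
    intro u hu
    have he1 : Real.exp (-(2*δ)) ≤ 1 - δ := by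
      have h1 : 1 + 2*δ ≤ Real.exp (2*δ) := by linarith [Real.add_one_le_exp (2*δ)]
      have h2 : Real.exp (-(2*δ)) = (Real.exp (2*δ))⁻¹ := by
        rw [← Real.exp_neg]
      rw [h2]
      have h3 : (Real.exp (2*δ))⁻¹ ≤ (1+2*δ)⁻¹ := by
        apply inv_anti₀ (by linarith) h1
      have h4 : (1:ℝ)/(1+2*δ) ≤ 1 - δ := by
        rw [div_le_iff₀ (by linarith : (0:ℝ) < 1+2*δ)]
        nlinarith
      rw [one_div] at h4
      linarith
    calc Real.exp (-(2*c₂)) ≤ Real.exp (-(2*δ) * u) := by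
          apply Real.exp_le_exp.2
          have : δ * u ≤ c₂ := by
            have hu' : (u:ℝ) ≤ Real.sqrt n := le_trans (by exact_mod_cast hu) hsr
            rw [hδ]
            rw [div_mul_eq_mul_div, div_le_iff₀ hsp]
            have := mul_le_mul_of_nonneg_left hu' hc₂pos.le
            linarith
          linarith
      _ = (Real.exp (-(2*δ)))^u := by
          rw [← Real.exp_nat_mul]; ring_nf
      _ ≤ (1-δ)^u := by
          apply pow_le_pow_left₀ (Real.exp_nonneg _) he1
  -- sum over window
  have hsum : (s:ℝ) * (Real.exp (-(2*c₂)) * (h a₀ : ℝ)) ≤ (n.choose k : ℝ) := by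
    have hv : (n.choose k : ℝ) = ∑ b ∈ range (k+1), (h b : ℝ) := by
      rw [vandermonde n k]
      push_cast
      simp only [hh, Nat.cast_mul]
    have hsub : Finset.Ico (a₀+1) (a₀+s+1) ⊆ range (k+1) := by
      intro b hb
      rw [Finset.mem_Ico] at hb
      rw [Finset.mem_range]
      omega
    have h1 : ∑ b ∈ Finset.Ico (a₀+1) (a₀+s+1), (h b:ℝ) ≤ ∑ b ∈ range (k+1), (h b:ℝ) :=
      Finset.sum_le_sum_of_subset_of_nonneg hsub (fun _ _ _ => Nat.cast_nonneg _)
    have h2 : (s:ℝ) * (Real.exp (-(2*c₂)) * (h a₀ : ℝ))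
        ≤ ∑ b ∈ Finset.Ico (a₀+1) (a₀+s+1), (h b:ℝ) := by
      have hcard : (Finset.Ico (a₀+1) (a₀+s+1)).card = s := by
        rw [Nat.card_Ico]; omega
      have : ∀ b ∈ Finset.Ico (a₀+1) (a₀+s+1),
          Real.exp (-(2*c₂)) * (h a₀ : ℝ) ≤ (h b:ℝ) := by
        intro b hb
        rw [Finset.mem_Ico] at hb
        obtain ⟨hb1, hb2⟩ := hb
        have hu : b = a₀ + (b - a₀) := by omega
        have hus : b - a₀ ≤ s := by omega
        calc Real.exp (-(2*c₂)) * (h a₀:ℝ) ≤ (1-δ)^(b-a₀) * (h a₀:ℝ) :=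
              mul_le_mul_of_nonneg_right (hexp _ hus) (Nat.cast_nonneg _)
          _ ≤ (h (a₀ + (b - a₀)):ℝ) := hchain _ hus
          _ = (h b:ℝ) := by rw [← hu]
      calc (s:ℝ) * (Real.exp (-(2*c₂)) * (h a₀ : ℝ))
          = (Finset.Ico (a₀+1) (a₀+s+1)).card * (Real.exp (-(2*c₂)) * (h a₀ : ℝ)) := by
            rw [hcard]
        _ ≤ ∑ b ∈ Finset.Ico (a₀+1) (a₀+s+1), (h b:ℝ) := by
            rw [← nsmul_eq_mul]
            exact Finset.card_nsmul_le_sum _ _ _ this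
    rw [hv]
    exact le_trans h2 h1
  -- conclude
  have hmax' : (h a : ℝ) ≤ (h a₀ : ℝ) := by
    exact_mod_cast h_max n k h2k a hak
  have hspos : (0:ℝ) < (s:ℝ) := by
    have : (2:ℝ) ≤ (s:ℝ) := by linarith
    linarith
  have hs2 : Real.sqrt n / 2 ≤ (s:ℝ) := by linarith
  have hepos : (0:ℝ) < Real.exp (-(2*c₂)) := Real.exp_pos _
  have hfin : (h a₀ : ℝ) ≤ (n.choose k : ℝ) / ((s:ℝ) * Real.exp (-(2*c₂))) := by
    rw [le_div_iff₀ (by positivity)]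
    calc (h a₀:ℝ) * ((s:ℝ) * Real.exp (-(2*c₂)))
        = (s:ℝ) * (Real.exp (-(2*c₂)) * (h a₀ : ℝ)) := by ring
      _ ≤ (n.choose k : ℝ) := hsum
  have hfin2 : (n.choose k : ℝ) / ((s:ℝ) * Real.exp (-(2*c₂)))
      ≤ 2 * Real.exp (2*c₂) / Real.sqrt n * (n.choose k : ℝ) := by
    rw [div_le_iff₀ (by positivity)]
    have he2 : Real.exp (2*c₂) * Real.exp (-(2*c₂)) = 1 := by
      rw [← Real.exp_add]; ring_nf; exact Real.exp_zero
    have hnck : (0:ℝ) ≤ (n.choose k : ℝ) := Nat.cast_nonneg _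
    have heq : 2 * Real.exp (2*c₂) / Real.sqrt n * (n.choose k : ℝ) * ((s:ℝ) * Real.exp (-(2*c₂)))
        = 2 * (s:ℝ) / Real.sqrt n * (n.choose k:ℝ) * (Real.exp (2*c₂) * Real.exp (-(2*c₂))) := by
      ring
    rw [heq, he2, mul_one]
    have h1 : (1:ℝ) ≤ 2 * (s:ℝ) / Real.sqrt n := by
      rw [le_div_iff₀ hsp]
      linarith
    calc (n.choose k:ℝ) = 1 * (n.choose k:ℝ) := by ring
      _ ≤ 2 * (s:ℝ) / Real.sqrt n * (n.choose k:ℝ) := mul_le_mul_of_nonneg_right h1 hnck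
  calc ((h a : ℕ):ℝ) ≤ (h a₀ : ℝ) := hmax'
    _ ≤ (n.choose k : ℝ) / ((s:ℝ) * Real.exp (-(2*c₂))) := hfin
    _ ≤ 2 * Real.exp (2*c₂) / Real.sqrt n * (n.choose k : ℝ) := hfin2


def Aset (n : ℕ) : Finset (Fin n) := univ.filter (fun i => (i : ℕ) < n/2)

lemma card_Aset (n : ℕ) : (Aset n).card = n/2 := by
  have h : Aset n = (Finset.Iio (n/2 : ℕ)).attachFin (fun m hm => by
      rw [Finset.mem_Iio] at hm; omega) := by
    ext x
    simp [Aset, Finset.mem_attachFin]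
  rw [h, Finset.card_attachFin, Nat.card_Iio]

lemma card_compl_Aset (n : ℕ) : ((Aset n)ᶜ).card = n - n/2 := by
  rw [Finset.card_compl, card_Aset]
  simp [Fintype.card_fin]

lemma slice_card (n k t : ℕ) (ht : t ≤ k) :
    ((univ : Finset (Finset (Fin n))).filter
        (fun X => X.card = k ∧ (X ∩ Aset n).card = t)).card
      = (n/2).choose t * (n - n/2).choose (k - t) := by
  rw [← card_compl_Aset n, ← card_Aset n, ← Finset.card_powersetCard, ← Finset.card_powersetCard,
      ← Finset.card_product]
  apply Finset.card_bij' (fun X _ => (X ∩ Aset n, X \ Aset n))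
      (fun p _ => p.1 ∪ p.2)
  · intro X hX
    simp only [Finset.mem_filter, Finset.mem_univ, true_and] at hX
    obtain ⟨h1, h2⟩ := hX
    rw [Finset.mem_product]
    constructor
    · rw [Finset.mem_powersetCard]
      exact ⟨Finset.inter_subset_right, h2⟩
    · rw [Finset.mem_powersetCard]
      refine ⟨?_, ?_⟩
      · intro x hx
        rw [Finset.mem_sdiff] at hx
        rw [Finset.mem_compl]
        exact hx.2
      · have h3 := Finset.card_inter_add_card_sdiff X (Aset n)
        show (X \ Aset n).card = k - t
        omega
  · intro p hp
    rw [Finset.mem_product, Finset.mem_powersetCard, Finset.mem_powersetCard] at hp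
    obtain ⟨⟨hp1, hp2⟩, ⟨hp3, hp4⟩⟩ := hp
    have hdisj : Disjoint p.1 p.2 := by
      apply Finset.disjoint_left.2
      intro x hx1 hx2
      have := hp1 hx1
      have := hp3 hx2
      rw [Finset.mem_compl] at *
      tauto
    simp only [Finset.mem_filter, Finset.mem_univ, true_and]
    constructor
    · rw [Finset.card_union_of_disjoint hdisj, hp2, hp4]
      omega
    · have : (p.1 ∪ p.2) ∩ Aset n = p.1 := by
        ext x
        simp only [Finset.mem_inter, Finset.mem_union]
        constructor
        · rintro ⟨h1 | h1, h2⟩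
          · exact h1
          · exact absurd h2 (by have := hp3 h1; rw [Finset.mem_compl] at this; exact this)
        · intro h1
          exact ⟨Or.inl h1, hp1 h1⟩
      rw [this, hp2]
  · intro X hX
    ext x
    simp only [Finset.mem_union, Finset.mem_inter, Finset.mem_sdiff]
    tauto
  · intro p hp
    rw [Finset.mem_product, Finset.mem_powersetCard, Finset.mem_powersetCard] at hp
    obtain ⟨⟨hp1, _⟩, ⟨hp3, _⟩⟩ := hp
    have h1 : (p.1 ∪ p.2) ∩ Aset n = p.1 := by
      ext x
      simp only [Finset.mem_inter, Finset.mem_union]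
      constructor
      · rintro ⟨h1 | h1, h2⟩
        · exact h1
        · exact absurd h2 (by have := hp3 h1; rw [Finset.mem_compl] at this; exact this)
      · intro h1
        exact ⟨Or.inl h1, hp1 h1⟩
    have h2 : (p.1 ∪ p.2) \ Aset n = p.2 := by
      ext x
      simp only [Finset.mem_sdiff, Finset.mem_union]
      constructor
      · rintro ⟨h1 | h1, h2⟩
        · exact absurd (hp1 h1) h2
        · exact h1
      · intro h1
        have := hp3 h1
        rw [Finset.mem_compl] at this
        exact ⟨Or.inr h1, this⟩
    rw [h1, h2]

lemma slice_empty (n k t : ℕ) (ht : k < t) :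
    ((univ : Finset (Finset (Fin n))).filter
        (fun X => X.card = k ∧ (X ∩ Aset n).card = t)).card = 0 := by
  rw [Finset.card_eq_zero]
  rw [Finset.filter_eq_empty_iff]
  intro X _
  rintro ⟨h1, h2⟩
  have := Finset.card_le_card (Finset.inter_subset_left : X ∩ Aset n ⊆ X)
  omega

lemma fiber_decomp (n R t : ℕ) :
    ((hamBall n R).filter (fun X => (X ∩ Aset n).card = t)).card
      = ∑ k ∈ range (R+1),
        ((univ : Finset (Finset (Fin n))).filter
          (fun X => X.card = k ∧ (X ∩ Aset n).card = t)).card := by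
  rw [Finset.card_eq_sum_card_fiberwise
    (f := fun X => X.card) (t := range (R+1)) ?_]
  · apply Finset.sum_congr rfl
    intro k hk
    rw [Finset.mem_range] at hk
    congr 1
    ext X
    simp only [hamBall, Finset.mem_filter, Finset.mem_univ, true_and]
    constructor
    · rintro ⟨⟨h1, h2⟩, h3⟩
      exact ⟨h3, h2⟩
    · rintro ⟨h1, h2⟩
      exact ⟨⟨by omega, h2⟩, h1⟩
  · intro X hX
    simp only [hamBall, Finset.mem_filter, Finset.mem_univ, true_and] at hX
    simp only [Finset.mem_coe, Finset.mem_filter, Finset.mem_univ, true_and, Finset.coe_range, Set.mem_Iio] at hX ⊢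
    exact Nat.lt_succ_of_le hX.1

lemma hamBall_card (n R : ℕ) :
    (hamBall n R).card = ∑ k ∈ range (R+1), n.choose k := by
  rw [Finset.card_eq_sum_card_fiberwise
    (f := fun X => X.card) (t := range (R+1)) ?_]
  · apply Finset.sum_congr rfl
    intro k hk
    rw [Finset.mem_range] at hk
    have h1 : (hamBall n R).filter (fun X => X.card = k)
        = Finset.powersetCard k (univ : Finset (Fin n)) := by
      ext X
      simp only [hamBall, Finset.mem_filter, Finset.mem_univ, true_and,
        Finset.mem_powersetCard, Finset.subset_univ]
      constructor
      · rintro ⟨h1, h2⟩; exact h2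
      · intro h2; exact ⟨by omega, h2⟩
    rw [h1, Finset.card_powersetCard, Finset.card_univ, Fintype.card_fin]
  · intro X hX
    simp only [hamBall, Finset.mem_filter, Finset.mem_univ, true_and] at hX
    simp only [Finset.mem_coe, Finset.mem_filter, Finset.mem_univ, true_and, Finset.coe_range, Set.mem_Iio] at hX ⊢
    exact Nat.lt_succ_of_le hX


lemma choose_le_of_le_half (n j d : ℕ) (h : j + d ≤ n/2) : n.choose j ≤ n.choose (j+d) := by
  induction d with
  | zero => simp
  | succ d ih =>
    have h1 : n.choose j ≤ n.choose (j+d) := ih (by omega)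
    have h2 : n.choose (j+d) ≤ n.choose (j+d+1) :=
      Nat.choose_le_succ_of_lt_half_left (by omega)
    have e : j + (d+1) = j + d + 1 := by omega
    rw [e]
    omega

lemma choose_double_le (n j : ℕ) : ∀ i, 3*(j+i) + 2 ≤ n → 2^i * n.choose j ≤ n.choose (j+i) := by
  intro i
  induction i with
  | zero => intro _; simp
  | succ i ih =>
    intro h
    have h1 := ih (by omega)
    have key : 2 * n.choose (j+i) ≤ n.choose (j+i+1) := by
      have hid := Nat.choose_succ_right_eq n (j+i)
      have h2 : 2 * n.choose (j+i) * (j+i+1) ≤ n.choose (j+i) * (n - (j+i)) := by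
        have hle : 2*(j+i+1) ≤ n - (j+i) := by omega
        calc 2 * n.choose (j+i) * (j+i+1) = n.choose (j+i) * (2*(j+i+1)) := by ring
          _ ≤ n.choose (j+i) * (n - (j+i)) := Nat.mul_le_mul_left _ hle
      rw [← hid] at h2
      exact Nat.le_of_mul_le_mul_right (by linarith [h2]) (by omega : 0 < j+i+1)
    calc 2^(i+1) * n.choose j = 2 * (2^i * n.choose j) := by ring
      _ ≤ 2 * n.choose (j+i) := by omega
      _ ≤ n.choose (j+i+1) := key

lemma pow4_le (j : ℕ) (h : 16 ≤ j) : j^4 ≤ 2^j := by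
  induction j, h using Nat.le_induction with
  | base => norm_num
  | succ j hj ih =>
    have a1 : 16*(j+1)^2 ≤ 19*j^2 := by nlinarith
    have a2 : (16*(j+1)^2) * (16*(j+1)^2) ≤ (19*j^2) * (19*j^2) := Nat.mul_le_mul a1 a1
    have h1 : (j+1)^4 ≤ 2*j^4 := by nlinarith [a2]
    calc (j+1)^4 ≤ 2*j^4 := h1
      _ ≤ 2*2^j := by omega
      _ = 2^(j+1) := by ring

lemma fiber_bound (ε : ℝ) (hε0 : 0 < ε) (hε1 : ε < 1/2) :
    ∃ C1 : ℝ, 0 < C1 ∧ ∃ n₁ : ℕ, ∀ n, n₁ ≤ n → ∀ R : ℕ, ε * n ≤ R → 2 * R ≤ n → ∀ t : ℕ,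
      (((hamBall n R).filter (fun X => (X ∩ Aset n).card = t)).card : ℝ)
        ≤ C1 / Real.sqrt n * ((hamBall n R).card : ℝ) := by
  obtain ⟨Cc, hCc, n₀, hcore⟩ := core ε hε0 hε1
  refine ⟨Cc + 1, by linarith, max n₀ ⌈(100/ε)^2⌉₊, ?_⟩
  intro n hn R hεR h2R t
  have hn₀ : n₀ ≤ n := le_trans (le_max_left _ _) hn
  have hns : ((100/ε)^2 : ℝ) ≤ n :=
    le_trans (Nat.le_ceil _) (by exact_mod_cast le_trans (le_max_right _ _) hn)
  have hq0 : (0:ℝ) ≤ 100/ε := by positivity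
  have hsqn : 100/ε ≤ Real.sqrt n := by
    have := Real.sqrt_le_sqrt hns
    rwa [Real.sqrt_sq hq0] at this
  have hsp : (0:ℝ) < Real.sqrt n := lt_of_lt_of_le (by positivity) hsqn
  have hb5 : Real.sqrt n * Real.sqrt n = (n:ℝ) := Real.mul_self_sqrt (Nat.cast_nonneg n)
  have h200 : (200:ℝ) ≤ Real.sqrt n := by
    have : (200:ℝ) ≤ 100/ε := by
      rw [le_div_iff₀ hε0]; linarith
    linarith
  have hnR : (40000:ℝ) ≤ (n:ℝ) := by nlinarith
  have hεs : (100:ℝ) ≤ ε * Real.sqrt n := by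
    have := mul_le_mul_of_nonneg_left hsqn hε0.le
    rw [mul_div_cancel₀ _ (ne_of_gt hε0)] at this
    linarith
  have hεn : 100 * Real.sqrt n ≤ ε * (n:ℝ) := by
    calc 100 * Real.sqrt n ≤ (ε * Real.sqrt n) * Real.sqrt n :=
          mul_le_mul_of_nonneg_right hεs (Real.sqrt_nonneg _)
      _ = ε * n := by rw [mul_assoc, hb5]
  have hεn2 : (20000:ℝ) ≤ ε * n := by nlinarith
  set k₀ : ℕ := ⌈ε * n / 4⌉₊ with hk₀
  have hk₀lo : ε * n / 4 ≤ (k₀:ℝ) := Nat.le_ceil _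
  have hk₀hi : (k₀:ℝ) ≤ ε * n / 4 + 1 := by
    have := Nat.ceil_lt_add_one (show (0:ℝ) ≤ ε*n/4 by positivity)
    linarith
  have hRr : ε * (n:ℝ) ≤ (R:ℝ) := hεR
  have h2k₀R : 2 * k₀ ≤ R := by
    have h1 : ((2*k₀ : ℕ):ℝ) ≤ (R:ℝ) := by
      push_cast
      linarith
    exact_mod_cast h1
  have h2Rn : R ≤ n/2 := by omega
  have hk₀n2 : k₀ ≤ n/2 := by omega
  have hk₀16 : 16 ≤ k₀ := by
    have h1 : (16:ℝ) ≤ (k₀:ℝ) := by linarith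
    exact_mod_cast h1
  have hdub : 3*(k₀+k₀) + 2 ≤ n := by
    have h1 : ((3*(k₀+k₀) + 2 : ℕ):ℝ) ≤ (n:ℝ) := by
      push_cast
      have : 6*(k₀:ℝ) ≤ 6*(ε*n/4+1) := by linarith
      nlinarith
    exact_mod_cast h1
  -- the sum decomposition
  have hslice : ∀ k ∈ range (R+1),
      ((((univ : Finset (Finset (Fin n))).filter
          (fun X => X.card = k ∧ (X ∩ Aset n).card = t)).card : ℕ):ℝ)
        ≤ (if k < k₀ then ((n.choose k : ℕ):ℝ) else 0) + Cc/Real.sqrt n * ((n.choose k : ℕ):ℝ) := by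
    intro k hk
    rw [mem_range] at hk
    have hrhs0 : (0:ℝ) ≤ Cc/Real.sqrt n * ((n.choose k : ℕ):ℝ) := by positivity
    rcases lt_or_ge k t with hkt | htk
    · rw [slice_empty n k t hkt]
      simp only [Nat.cast_zero]
      positivity
    · rw [slice_card n k t htk]
      rcases lt_or_ge k k₀ with hkk | hkk
      · simp only [if_pos hkk]
        have := term_le n k t htk
        have h1 : (((n/2).choose t * (n - n/2).choose (k - t) : ℕ):ℝ) ≤ ((n.choose k : ℕ):ℝ) := by
          exact_mod_cast this
        linarith
      · simp only [if_neg (not_lt.2 hkk)]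
        have hεk : ε * n ≤ 8 * k := by
          have : (k₀:ℝ) ≤ (k:ℝ) := by exact_mod_cast hkk
          linarith
        have h2kn : 2*k ≤ n := by omega
        have := hcore n hn₀ k hεk h2kn t htk
        linarith
  have hdec : (((hamBall n R).filter (fun X => (X ∩ Aset n).card = t)).card : ℝ)
      = ∑ k ∈ range (R+1),
        ((((univ : Finset (Finset (Fin n))).filter
          (fun X => X.card = k ∧ (X ∩ Aset n).card = t)).card : ℕ):ℝ) := by
    rw [fiber_decomp n R t]
    push_cast
    rfl
  have hB : ((hamBall n R).card : ℝ) = ∑ k ∈ range (R+1), ((n.choose k : ℕ):ℝ) := by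
    rw [hamBall_card n R]
    push_cast
    rfl
  -- junk sum bound
  have hjunk : ∑ k ∈ range k₀, ((n.choose k : ℕ):ℝ) ≤ 1/Real.sqrt n * ((hamBall n R).card:ℝ) := by
    have hmono : ∀ j ∈ range k₀, (n.choose j : ℕ) ≤ n.choose k₀ := by
      intro j hj
      rw [mem_range] at hj
      have := choose_le_of_le_half n j (k₀ - j) (by omega)
      rwa [show j + (k₀ - j) = k₀ by omega] at this
    have h1 : ∑ k ∈ range k₀, ((n.choose k : ℕ):ℝ) ≤ (k₀:ℝ) * ((n.choose k₀:ℕ):ℝ) := by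
      calc ∑ k ∈ range k₀, ((n.choose k : ℕ):ℝ)
          ≤ ∑ k ∈ range k₀, ((n.choose k₀ : ℕ):ℝ) := by
            apply Finset.sum_le_sum
            intro j hj
            exact_mod_cast hmono j hj
        _ = (k₀:ℝ) * ((n.choose k₀:ℕ):ℝ) := by
            rw [Finset.sum_const, Finset.card_range, nsmul_eq_mul]
    have h2 : ((2^k₀ * n.choose k₀ : ℕ):ℝ) ≤ ((n.choose (2*k₀) : ℕ):ℝ) := by
      have := choose_double_le n k₀ k₀ hdub
      rw [show k₀ + k₀ = 2*k₀ by omega] at this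
      exact_mod_cast this
    have h3 : ((n.choose (2*k₀):ℕ):ℝ) ≤ ((hamBall n R).card:ℝ) := by
      rw [hB]
      apply Finset.single_le_sum (f := fun k => ((n.choose k : ℕ):ℝ))
        (fun _ _ => Nat.cast_nonneg _)
      rw [mem_range]; omega
    have hpow : (n:ℝ) * Real.sqrt n ≤ ((2:ℝ))^k₀ := by
      have hp1 : ((k₀^4 : ℕ):ℝ) ≤ ((2^k₀ : ℕ):ℝ) := by exact_mod_cast pow4_le k₀ hk₀16
      push_cast at hp1
      have hs1 : (ε*n/4)^2 ≥ (n:ℝ) := by nlinarith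
      have hnn0 : (0:ℝ) ≤ (n:ℝ) := Nat.cast_nonneg n
      have ht0 : (0:ℝ) ≤ ε*n/4 := by positivity
      have t1 : (ε*n/4)^2 ≤ (k₀:ℝ)^2 := by nlinarith
      have t2 : ((ε*n/4)^2)^2 ≤ ((k₀:ℝ)^2)^2 := by nlinarith [sq_nonneg (ε*n/4)]
      have t3 : (n:ℝ)^2 ≤ ((ε*n/4)^2)^2 := by nlinarith
      have hs2 : ((k₀:ℝ))^4 ≥ (n:ℝ)^2 := by nlinarith [t2, t3]
      have hs3 : (n:ℝ) * Real.sqrt n ≤ (n:ℝ)^2 := by nlinarith [Real.sqrt_nonneg (n:ℝ)]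
      linarith
    -- combine: Σ ≤ k₀ C(n,k₀) ≤ n C(n,k₀) ≤ n |B|/2^k₀ ≤ |B|/√n
    have hk₀n : (k₀:ℝ) ≤ (n:ℝ) := by
      have : k₀ ≤ n := by omega
      exact_mod_cast this
    have h2' : ((n.choose k₀:ℕ):ℝ) ≤ ((hamBall n R).card:ℝ) / (2:ℝ)^k₀ := by
      rw [le_div_iff₀ (by positivity)]
      have : ((n.choose k₀:ℕ):ℝ) * (2:ℝ)^k₀ = ((2^k₀ * n.choose k₀ : ℕ):ℝ) := by
        push_cast; ring
      rw [this]
      linarith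
    have hBnn : (0:ℝ) ≤ ((hamBall n R).card:ℝ) := Nat.cast_nonneg _
    calc ∑ k ∈ range k₀, ((n.choose k : ℕ):ℝ) ≤ (k₀:ℝ) * ((n.choose k₀:ℕ):ℝ) := h1
      _ ≤ (n:ℝ) * ((n.choose k₀:ℕ):ℝ) := by
          apply mul_le_mul_of_nonneg_right hk₀n (Nat.cast_nonneg _)
      _ ≤ (n:ℝ) * (((hamBall n R).card:ℝ) / (2:ℝ)^k₀) := by
          apply mul_le_mul_of_nonneg_left h2' (Nat.cast_nonneg _)
      _ ≤ 1/Real.sqrt n * ((hamBall n R).card:ℝ) := by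
          rw [mul_div_assoc']
          rw [div_le_iff₀ (by positivity), one_div, inv_mul_eq_div, div_mul_eq_mul_div,
            le_div_iff₀ hsp]
          calc (n:ℝ) * ((hamBall n R).card:ℝ) * Real.sqrt n
              = ((n:ℝ) * Real.sqrt n) * ((hamBall n R).card:ℝ) := by ring
            _ ≤ (2:ℝ)^k₀ * ((hamBall n R).card:ℝ) :=
                mul_le_mul_of_nonneg_right hpow hBnn
            _ = ((hamBall n R).card:ℝ) * (2:ℝ)^k₀ := by ring
  -- main assembly
  have hite : ∑ k ∈ range (R+1), (if k < k₀ then ((n.choose k : ℕ):ℝ) else 0)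
      = ∑ k ∈ range k₀, ((n.choose k : ℕ):ℝ) := by
    rw [← Finset.sum_filter]
    congr 1
    ext j
    simp only [mem_filter, mem_range]
    omega
  calc (((hamBall n R).filter (fun X => (X ∩ Aset n).card = t)).card : ℝ)
      = ∑ k ∈ range (R+1),
        ((((univ : Finset (Finset (Fin n))).filter
          (fun X => X.card = k ∧ (X ∩ Aset n).card = t)).card : ℕ):ℝ) := hdec
    _ ≤ ∑ k ∈ range (R+1),
        ((if k < k₀ then ((n.choose k : ℕ):ℝ) else 0) + Cc/Real.sqrt n * ((n.choose k : ℕ):ℝ)) :=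
        Finset.sum_le_sum hslice
    _ = ∑ k ∈ range (R+1), (if k < k₀ then ((n.choose k : ℕ):ℝ) else 0)
        + Cc/Real.sqrt n * ∑ k ∈ range (R+1), ((n.choose k : ℕ):ℝ) := by
        rw [Finset.sum_add_distrib, Finset.mul_sum]
    _ ≤ 1/Real.sqrt n * ((hamBall n R).card:ℝ)
        + Cc/Real.sqrt n * ((hamBall n R).card:ℝ) := by
        rw [hite, ← hB]
        exact add_le_add hjunk (le_refl _)
    _ = (Cc + 1)/Real.sqrt n * ((hamBall n R).card:ℝ) := by ring

lemma card_close (n : ℕ) (X Y A : Finset (Fin n)) (h : (symmDiff X Y).card = 1) :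
    (Y ∩ A).card ≤ (X ∩ A).card + 1 ∧ (X ∩ A).card ≤ (Y ∩ A).card + 1 := by
  have e : symmDiff (X ∩ A) (Y ∩ A) = (symmDiff X Y) ∩ A :=
    (inf_symmDiff_distrib_right X Y A).symm
  have hc : (symmDiff (X ∩ A) (Y ∩ A)).card ≤ 1 := by
    rw [e]
    calc ((symmDiff X Y) ∩ A).card ≤ (symmDiff X Y).card :=
          Finset.card_le_card Finset.inter_subset_left
      _ = 1 := h
  constructor
  · have hsub : Y ∩ A ⊆ (X ∩ A) ∪ symmDiff (X ∩ A) (Y ∩ A) := by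
      intro x hx
      rw [Finset.mem_union, Finset.mem_symmDiff]
      by_cases hX : x ∈ X ∩ A
      · exact Or.inl hX
      · exact Or.inr (Or.inr ⟨hx, hX⟩)
    calc (Y ∩ A).card ≤ ((X ∩ A) ∪ symmDiff (X ∩ A) (Y ∩ A)).card := Finset.card_le_card hsub
      _ ≤ (X ∩ A).card + (symmDiff (X ∩ A) (Y ∩ A)).card := Finset.card_union_le _ _
      _ ≤ (X ∩ A).card + 1 := by omega
  · have hsub : X ∩ A ⊆ (Y ∩ A) ∪ symmDiff (X ∩ A) (Y ∩ A) := by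
      intro x hx
      rw [Finset.mem_union, Finset.mem_symmDiff]
      by_cases hY : x ∈ Y ∩ A
      · exact Or.inl hY
      · exact Or.inr (Or.inl ⟨hx, hY⟩)
    calc (X ∩ A).card ≤ ((Y ∩ A) ∪ symmDiff (X ∩ A) (Y ∩ A)).card := Finset.card_le_card hsub
      _ ≤ (Y ∩ A).card + (symmDiff (X ∩ A) (Y ∩ A)).card := Finset.card_union_le _ _
      _ ≤ (Y ∩ A).card + 1 := by omega


end IsoAux

/-- Sharpness of the isoperimetric inequality for Hamming balls: for every `ε ∈ (0,1/2)`
there is `C = C(ε) > 0` such that for all `n, R` with `εn ≤ R ≤ n/2` and every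
`α ∈ (ε, 1−ε)`, some `M ⊆ B_n(R)` with `|M| = ⌊α|B_n(R)|⌋` has
`|∂_{B_n(R)} M| ≤ (C/√n) · min(|M|, |B_n(R) \ M|)`. -/
theorem iso_ball_sharp (ε : ℝ) (hε0 : 0 < ε) (hε1 : ε < 1/2) :
    ∃ C : ℝ, 0 < C ∧ ∀ n R : ℕ, ε * n ≤ R → 2 * R ≤ n →
      ∀ α : ℝ, ε < α → α < 1 - ε →
        ∃ M : Finset (Finset (Fin n)), M ⊆ hamBall n R ∧
          M.card = ⌊α * ((hamBall n R).card : ℝ)⌋₊ ∧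
          ((ballBoundary n R M).card : ℝ) ≤
            C / Real.sqrt n * min (M.card : ℝ) (((hamBall n R \ M).card : ℝ)) := by
  obtain ⟨C1, hC1, n₁, hfb⟩ := IsoAux.fiber_bound ε hε0 hε1
  set n₂ : ℕ := max n₁ (⌈(2/ε)⌉₊ + 1) with hn₂
  refine ⟨max ((2:ℝ)^n₂ * Real.sqrt n₂ + 1) (4*C1/ε), ?_, ?_⟩
  · apply lt_max_of_lt_left
    positivity
  intro n R hεR h2R α hα1 hα2
  set C : ℝ := max ((2:ℝ)^n₂ * Real.sqrt n₂ + 1) (4*C1/ε) with hC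
  have hCpos : 0 < C := lt_max_of_lt_left (by positivity)
  set B := hamBall n R with hB
  set N := ⌊α * (B.card : ℝ)⌋₊ with hN
  have hα0 : 0 < α := lt_trans hε0 hα1
  have hαlt1 : α < 1 := by linarith
  have hBpos : 0 < B.card := by
    apply Finset.card_pos.2
    exact ⟨∅, by simp [hB, hamBall]⟩
  have hBr : (1:ℝ) ≤ (B.card : ℝ) := by exact_mod_cast hBpos
  have hNlt : N < B.card := by
    rw [hN, Nat.floor_lt (by positivity)]
    nlinarith
  have hNle : N ≤ B.card := hNlt.le
  have hNlb : α * (B.card:ℝ) < (N:ℝ) + 1 := Nat.lt_floor_add_one _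
  have hNub : (N:ℝ) ≤ α * (B.card:ℝ) := Nat.floor_le (by positivity)
  -- the boundary is inside the ball
  have hbb : ∀ M : Finset (Finset (Fin n)), ballBoundary n R M ⊆ B :=
    fun M => Finset.filter_subset _ _
  rcases lt_or_ge n n₂ with hsmall | hbig
  · -- small case
    obtain ⟨M, hMB, hMcard⟩ := Finset.exists_subset_card_eq hNle
    refine ⟨M, hMB, hMcard, ?_⟩
    rcases Nat.eq_zero_or_pos N with hN0 | hN1
    · have hM0 : M = ∅ := Finset.card_eq_zero.mp (by omega)
      subst hM0
      have : ballBoundary n R ∅ = ∅ := by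
        simp [ballBoundary]
      rw [this]
      simp only [Finset.card_empty, Nat.cast_zero, CharP.cast_eq_zero]
      have : min (0:ℝ) ((B \ ∅).card : ℝ) = 0 :=
        min_eq_left (Nat.cast_nonneg _)
      rw [this, mul_zero]
    · -- N ≥ 1
      have hn1 : 1 ≤ n := by
        by_contra hc
        push_neg at hc
        have h0 : n = 0 := by omega
        have hb1 : B.card ≤ 1 := by
          calc B.card ≤ (Finset.univ : Finset (Finset (Fin n))).card := Finset.card_le_univ _
            _ = 2^n := by rw [Finset.card_univ, Fintype.card_finset, Fintype.card_fin]
            _ = 1 := by rw [h0]; norm_num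
        omega
      have hsp : (0:ℝ) < Real.sqrt n := Real.sqrt_pos.2 (by exact_mod_cast hn1)
      have hmin1 : (1:ℝ) ≤ min (M.card : ℝ) (((B \ M).card : ℝ)) := by
        apply le_min
        · rw [hMcard]; exact_mod_cast hN1
        · have : 1 ≤ (B \ M).card := by
            rw [Finset.card_sdiff_of_subset hMB]
            omega
          exact_mod_cast this
      have hbd : ((ballBoundary n R M).card : ℝ) ≤ (2:ℝ)^n := by
        calc ((ballBoundary n R M).card : ℝ) ≤ ((Finset.univ : Finset (Finset (Fin n))).card : ℝ) := by
              exact_mod_cast Finset.card_le_univ _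
          _ = (2:ℝ)^n := by
              rw [Finset.card_univ, Fintype.card_finset, Fintype.card_fin]
              push_cast
              ring
      have hCn : (2:ℝ)^n * Real.sqrt n ≤ C := by
        have h1 : (2:ℝ)^n ≤ (2:ℝ)^n₂ := by
          apply pow_le_pow_right₀ (by norm_num) (by omega)
        have h2 : Real.sqrt n ≤ Real.sqrt n₂ := Real.sqrt_le_sqrt (by exact_mod_cast hsmall.le)
        calc (2:ℝ)^n * Real.sqrt n ≤ (2:ℝ)^n₂ * Real.sqrt n₂ := by
              apply mul_le_mul h1 h2 (Real.sqrt_nonneg _) (by positivity)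
          _ ≤ C := le_trans (by linarith) (le_max_left _ _)
      calc ((ballBoundary n R M).card : ℝ) ≤ (2:ℝ)^n := hbd
        _ ≤ C / Real.sqrt n := by
            rw [le_div_iff₀ hsp]
            linarith [hCn]
        _ ≤ C / Real.sqrt n * min (M.card : ℝ) (((B \ M).card : ℝ)) := by
            nlinarith [div_nonneg hCpos.le (Real.sqrt_nonneg (n:ℝ)), hmin1]
  · -- main case
    have hn₁ : n₁ ≤ n := le_trans (le_max_left _ _) hbig
    have hn2ε : (2:ℝ)/ε ≤ n := by
      have h1 : (⌈(2/ε)⌉₊ + 1 : ℕ) ≤ n := le_trans (le_max_right _ _) hbig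
      have h2 : ((⌈(2/ε)⌉₊ : ℕ):ℝ) ≤ n := by exact_mod_cast by omega
      exact le_trans (Nat.le_ceil _) h2
    have hn1 : 1 ≤ n := by
      by_contra hc
      push_neg at hc
      have h0 : (n:ℝ) = 0 := by exact_mod_cast (by omega : n = 0)
      rw [h0] at hn2ε
      have : (2:ℝ)/ε > 0 := by positivity
      linarith
    have hsp : (0:ℝ) < Real.sqrt n := Real.sqrt_pos.2 (by exact_mod_cast hn1)
    have hR1 : 1 ≤ R := by
      have : (0:ℝ) < ε * n := by
        have : (1:ℝ) ≤ (n:ℝ) := by exact_mod_cast hn1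
        positivity
      have h1 : (0:ℝ) < (R:ℝ) := lt_of_lt_of_le this hεR
      have h2 : 0 < R := by exact_mod_cast h1
      omega
    -- B.card ≥ n+1
    have hBn : (n:ℝ) + 1 ≤ (B.card : ℝ) := by
      have h1 : B.card = ∑ k ∈ range (R+1), n.choose k := IsoAux.hamBall_card n R
      have h2 : ∑ k ∈ range 2, n.choose k ≤ ∑ k ∈ range (R+1), n.choose k := by
        apply Finset.sum_le_sum_of_subset
        apply Finset.range_subset_range.2
        omega
      have h3 : ∑ k ∈ range 2, n.choose k = 1 + n := by
        simp [Finset.sum_range_succ]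
      have h4 : 1 + n ≤ B.card := by omega
      have h5 : ((1 + n : ℕ):ℝ) ≤ (B.card:ℝ) := by exact_mod_cast h4
      push_cast at h5
      linarith
    have hεB : (2:ℝ) ≤ ε * B.card := by
      have h1 : ε * ((n:ℝ)+1) ≤ ε * B.card := mul_le_mul_of_nonneg_left hBn hε0.le
      have h2 : ε * ((2:ℝ)/ε) ≤ ε * n := mul_le_mul_of_nonneg_left hn2ε hε0.le
      have h3 : ε * ((2:ℝ)/ε) = 2 := by field_simp
      nlinarith
    have hN1 : 1 ≤ N := by
      have h1 : ε * (B.card:ℝ) ≤ α * B.card := by nlinarith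
      have h2 : (1:ℝ) ≤ (N:ℝ) := by linarith
      exact_mod_cast h2
    -- the threshold construction
    set g : Finset (Fin n) → ℕ := fun X => (X ∩ IsoAux.Aset n).card with hg
    set G : ℕ → Finset (Finset (Fin n)) := fun a => B.filter (fun X => g X < a) with hG
    have hex : ∃ a, N ≤ (G a).card := by
      refine ⟨n+1, ?_⟩
      have : G (n+1) = B := by
        rw [hG]
        apply Finset.filter_true_of_mem
        intro X _
        have h1 : (X ∩ IsoAux.Aset n).card ≤ n := by
          calc (X ∩ IsoAux.Aset n).card ≤ (Finset.univ : Finset (Fin n)).card :=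
                Finset.card_le_univ _
            _ = n := by rw [Finset.card_univ, Fintype.card_fin]
        simp only [hg]
        omega
      rw [this]
      exact hNle
    set t' : ℕ := Nat.find hex with ht'
    have hfind : N ≤ (G t').card := Nat.find_spec hex
    have ht'pos : 1 ≤ t' := by
      rcases Nat.eq_zero_or_pos t' with h0 | h1
      · exfalso
        have := hfind
        rw [h0] at this
        have hG0 : G 0 = ∅ := by
          rw [hG]
          apply Finset.filter_false_of_mem
          intro X _
          omega
        rw [hG0] at this
        simp at this
        omega
      · exact h1
    set t : ℕ := t' - 1 with ht
    have hGt : (G t).card < N := by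
      have := Nat.find_min hex (show t < t' by omega)
      omega
    have hsplit : G (t+1) = G t ∪ B.filter (fun X => g X = t) := by
      rw [hG]
      ext X
      simp only [Finset.mem_filter, Finset.mem_union]
      constructor
      · rintro ⟨h1, h2⟩
        rcases Nat.lt_or_ge (g X) t with h3 | h3
        · exact Or.inl ⟨h1, h3⟩
        · exact Or.inr ⟨h1, by omega⟩
      · rintro (⟨h1, h2⟩ | ⟨h1, h2⟩)
        · exact ⟨h1, by omega⟩
        · exact ⟨h1, by omega⟩
    have hdisj : Disjoint (G t) (B.filter (fun X => g X = t)) := by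
      apply Finset.disjoint_left.2
      intro X h1 h2
      rw [hG, Finset.mem_filter] at h1
      rw [Finset.mem_filter] at h2
      omega
    have hGt1 : N ≤ (G t).card + (B.filter (fun X => g X = t)).card := by
      have h1 : (G (t+1)).card = (G t).card + (B.filter (fun X => g X = t)).card := by
        rw [hsplit, Finset.card_union_of_disjoint hdisj]
      have h2 : N ≤ (G (t+1)).card := by
        have : t + 1 = t' := by omega
        rw [this]
        exact hfind
      omega
    obtain ⟨T, hTsub, hTcard⟩ := Finset.exists_subset_card_eq
      (show N - (G t).card ≤ (B.filter (fun X => g X = t)).card by omega)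
    set M : Finset (Finset (Fin n)) := G t ∪ T with hM
    have hMB : M ⊆ B := by
      rw [hM]
      apply Finset.union_subset
      · exact Finset.filter_subset _ _
      · exact le_trans hTsub (Finset.filter_subset _ _)
    have hdisj2 : Disjoint (G t) T := by
      apply Finset.disjoint_left.2
      intro X h1 h2
      have h3 := hTsub h2
      rw [hG, Finset.mem_filter] at h1
      rw [Finset.mem_filter] at h3
      omega
    have hMcard : M.card = N := by
      rw [hM, Finset.card_union_of_disjoint hdisj2, hTcard]
      omega
    refine ⟨M, hMB, hMcard, ?_⟩
    -- boundary containment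
    have hbsub : ballBoundary n R M ⊆
        B.filter (fun X => g X = t) ∪ B.filter (fun X => g X = t+1) := by
      intro Y hY
      rw [ballBoundary, Finset.mem_filter] at hY
      obtain ⟨hYB, hYM, X, hXM, hXY⟩ := hY
      have hgY1 : t ≤ g Y := by
        by_contra hc
        push_neg at hc
        exact hYM (Finset.mem_union_left _ (by rw [hG, Finset.mem_filter]; exact ⟨hYB, hc⟩))
      have hgX : g X ≤ t := by
        rcases Finset.mem_union.1 hXM with h1 | h1
        · rw [hG, Finset.mem_filter] at h1
          omega
        · have := hTsub h1
          rw [Finset.mem_filter] at this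
          omega
      have hclose := IsoAux.card_close n X Y (IsoAux.Aset n) hXY
      have hgY2 : g Y ≤ t + 1 := by
        have := hclose.1
        rw [hg]
        simp only [hg] at hgX ⊢
        omega
      rw [Finset.mem_union, Finset.mem_filter, Finset.mem_filter]
      rcases Nat.eq_or_lt_of_le hgY1 with h1 | h1
      · exact Or.inl ⟨hYB, h1.symm⟩
      · exact Or.inr ⟨hYB, by omega⟩
    have hbcard : ((ballBoundary n R M).card : ℝ)
        ≤ ((B.filter (fun X => g X = t)).card : ℝ)
          + ((B.filter (fun X => g X = t+1)).card : ℝ) := by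
      have h1 : (ballBoundary n R M).card
          ≤ (B.filter (fun X => g X = t) ∪ B.filter (fun X => g X = t+1)).card :=
        Finset.card_le_card hbsub
      have h2 := Finset.card_union_le (B.filter (fun X => g X = t))
        (B.filter (fun X => g X = t+1))
      exact_mod_cast by omega
    have hf1 := hfb n hn₁ R hεR h2R t
    have hf2 := hfb n hn₁ R hεR h2R (t+1)
    -- min bound
    have hNr : (ε/2) * (B.card:ℝ) ≤ (N:ℝ) := by
      have h1 : ε * (B.card:ℝ) - 1 ≤ (N:ℝ) := by nlinarith
      nlinarith
    have hsdiff : ((B \ M).card : ℝ) = (B.card:ℝ) - (N:ℝ) := by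
      rw [Finset.card_sdiff_of_subset hMB, hMcard]
      push_cast [Nat.cast_sub hNle]
      ring
    have hcompl : (ε/2) * (B.card:ℝ) ≤ ((B \ M).card : ℝ) := by
      rw [hsdiff]
      nlinarith
    have hminB : (ε/2) * (B.card:ℝ) ≤ min ((M.card:ℝ)) (((B \ M).card : ℝ)) := by
      apply le_min
      · rw [hMcard]; exact hNr
      · exact hcompl
    have hBle : (B.card : ℝ) ≤ (2/ε) * min ((M.card:ℝ)) (((B \ M).card : ℝ)) := by
      have h1 : (ε/2) * (B.card:ℝ) * (2/ε) ≤ min ((M.card:ℝ)) (((B \ M).card : ℝ)) * (2/ε) :=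
        mul_le_mul_of_nonneg_right hminB (by positivity)
      have h2 : (ε/2) * (B.card:ℝ) * (2/ε) = (B.card:ℝ) := by
        field_simp
      linarith [h1, h2]
    have hmin0 : (0:ℝ) ≤ min ((M.card:ℝ)) (((B \ M).card : ℝ)) :=
      le_min (Nat.cast_nonneg _) (Nat.cast_nonneg _)
    calc ((ballBoundary n R M).card : ℝ)
        ≤ ((B.filter (fun X => g X = t)).card : ℝ)
          + ((B.filter (fun X => g X = t+1)).card : ℝ) := hbcard
      _ ≤ 2 * (C1 / Real.sqrt n * (B.card:ℝ)) := by
          simp only [hg]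
          linarith [hf1, hf2]
      _ ≤ 2 * (C1 / Real.sqrt n * ((2/ε) * min ((M.card:ℝ)) (((B \ M).card : ℝ)))) := by
          apply mul_le_mul_of_nonneg_left _ (by norm_num)
          apply mul_le_mul_of_nonneg_left hBle (by positivity)
      _ = (4*C1/ε) / Real.sqrt n * min ((M.card:ℝ)) (((B \ M).card : ℝ)) := by
          field_simp
          ring
      _ ≤ C / Real.sqrt n * min ((M.card:ℝ)) (((B \ M).card : ℝ)) :=
          mul_le_mul_of_nonneg_right ((div_le_div_iff_of_pos_right hsp).2 (le_max_right _ _)) hmin0
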